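/- If G has no antitriangles and has a Kempe-coloring of size k, then G is k-connected or admits a shallow clique minor of size k. -/

import Mathlib

open SimpleGraph

/-- `A` is an anticlique (independent set) of `G`. -/
def IsAnticlique {V : Type*} (G : SimpleGraph V) (A : Finset V) : Prop :=
  ∀ x ∈ A, ∀ y ∈ A, ¬ G.Adj x y

/-- A coloring of `G`: a partition of the vertex set into nonempty anticliques. -/
def IsColoring {V : Type*} (G : SimpleGraph V) (c : Finset (Finset V)) : Prop :=
  (∀ A ∈ c, A.Nonempty) ∧
  (∀ A ∈ c, ∀ B ∈ c, A ≠ B → Disjoint A B) ∧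
  (∀ v : V, ∃ A ∈ c, v ∈ A) ∧
  (∀ A ∈ c, IsAnticlique G A)

/-- `A` induces a connected subgraph of `G`. -/
def ConnSet {V : Type*} (G : SimpleGraph V) (A : Finset V) : Prop :=
  (G.induce (↑A : Set V)).Connected

/-- A Kempe-coloring: any two distinct classes induce a connected subgraph. -/
def IsKempe {V : Type*} [DecidableEq V] (G : SimpleGraph V) (c : Finset (Finset V)) : Prop :=
  IsColoring G c ∧ ∀ A ∈ c, ∀ B ∈ c, A ≠ B → ConnSet G (A ∪ B)

/-- Two vertex sets are adjacent if some edge joins them. -/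
def SetsAdj {V : Type*} (G : SimpleGraph V) (A B : Finset V) : Prop :=
  ∃ a ∈ A, ∃ b ∈ B, G.Adj a b

/-- A clique minor: pairwise disjoint, pairwise adjacent, nonempty connected subsets. -/
def IsCliqueMinor {V : Type*} (G : SimpleGraph V) (K : Finset (Finset V)) : Prop :=
  (∀ A ∈ K, A.Nonempty) ∧ (∀ A ∈ K, ConnSet G A) ∧
  (∀ A ∈ K, ∀ B ∈ K, A ≠ B → Disjoint A B ∧ SetsAdj G A B)

/-- A shallow clique minor: a clique minor all of whose branch sets have size 1 or 2. -/
def IsShallowCliqueMinor {V : Type*} (G : SimpleGraph V) (K : Finset (Finset V)) : Prop :=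
  IsCliqueMinor G K ∧ ∀ A ∈ K, A.card ≤ 2

/-- `T` is a transversal of the family `K`: it meets each member in exactly one vertex. -/
def Traversed {V : Type*} [DecidableEq V] (T : Finset V) (K : Finset (Finset V)) : Prop :=
  ∀ A ∈ K, (T ∩ A).card = 1

/-- `c` is a coloring of `G` of minimum size, i.e. of size `χ(G)`. -/
def MinColoring {V : Type*} (G : SimpleGraph V) (c : Finset (Finset V)) : Prop :=
  IsColoring G c ∧ ∀ d, IsColoring G d → c.card ≤ d.card

/-- `G` has no antitriangle (independent set of size 3). -/
def HasNoAntitriangle {V : Type*} (G : SimpleGraph V) : Prop :=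
  ¬ ∃ A : Finset V, A.card = 3 ∧ IsAnticlique G A

set_option linter.unusedSectionVars false
set_option maxHeartbeats 1000000

section Helpers
variable {V : Type*} [DecidableEq V] {G : SimpleGraph V}

lemma walk_invariant {W : Type*} {H : SimpleGraph W} (P : W → Prop)
    (hP : ∀ u v, H.Adj u v → P u → P v) {u v : W} (w : H.Walk u v) (hu : P u) : P v := by
  induction w with
  | nil => exact hu
  | cons h p ih => exact ih (hP _ _ h hu)

lemma no_adj_extract {T : Set V} (hc : (G.induce T).Connected) (P : V → Prop)
    (hstep : ∀ u ∈ T, ∀ v ∈ T, G.Adj u v → P u → P v)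
    {u v : V} (hu : u ∈ T) (hv : v ∈ T) (hPu : P u) : P v := by
  obtain ⟨w⟩ := hc.preconnected ⟨u, hu⟩ ⟨v, hv⟩
  exact walk_invariant (fun x : T => P x.val) (fun x y hxy => hstep x x.2 y y.2 hxy) w hPu

lemma reach_step {T : Set V} {u v : V} (hu : u ∈ T) (hv : v ∈ T) (h : G.Adj u v) :
    (G.induce T).Reachable ⟨u, hu⟩ ⟨v, hv⟩ :=
  SimpleGraph.Adj.reachable h

lemma connected_of_hub {T : Set V} {r : V} (hr : r ∈ T)
    (h : ∀ v, (hv : v ∈ T) → (G.induce T).Reachable ⟨v, hv⟩ ⟨r, hr⟩) :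
    (G.induce T).Connected := by
  rw [SimpleGraph.connected_iff]
  exact ⟨fun u v => (h u.1 u.2).trans (h v.1 v.2).symm, ⟨⟨r, hr⟩⟩⟩

lemma connSet_single (x : V) : ConnSet G {x} := by
  apply connected_of_hub (r := x) (by simp)
  intro v hv
  have hvx : v = x := by simpa using hv
  subst hvx; exact Reachable.refl _

lemma connSet_pair {x y : V} (h : G.Adj x y) : ConnSet G ({x, y} : Finset V) := by
  apply connected_of_hub (r := x) (by simp)
  intro v hv
  have hv' : v = x ∨ v = y := by simpa using hv
  rcases hv' with rfl | rfl
  · exact Reachable.refl _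
  · exact reach_step _ _ h.symm

/-- a two-element connected set gives an edge -/
lemma adj_of_conn_two {F : Finset V} (hc : ConnSet G F) {u v : V} (hu : u ∈ F) (hv : v ∈ F)
    (hcov : ∀ z ∈ F, z = u ∨ z = v) (hne : u ≠ v) : G.Adj u v := by
  by_contra hadj
  have hstep : ∀ x ∈ (↑F : Set V), ∀ y ∈ (↑F : Set V), G.Adj x y → x = u → y = u := by
    intro x hx y hy hxy hxu
    rw [hxu] at hxy
    rcases hcov y (by simpa using hy) with h1 | h1
    · exact h1
    · rw [h1] at hxy; exact absurd hxy hadj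
  exact hne ((no_adj_extract hc (fun z => z = u) hstep (by simpa using hu) (by simpa using hv) rfl).symm)

lemma kempe_single_pair {F : Finset V} (hc : ConnSet G F) {u x y : V}
    (hu : u ∈ F) (hx : x ∈ F) (hy : y ∈ F)
    (hcov : ∀ z ∈ F, z = u ∨ z = x ∨ z = y)
    (hux : u ≠ x) (huy : u ≠ y) (hxy : ¬ G.Adj x y) : G.Adj u x ∧ G.Adj u y := by
  constructor
  · by_contra hax
    have hstep : ∀ z ∈ (↑F : Set V), ∀ z' ∈ (↑F : Set V), G.Adj z z' → z = x → z' = x := by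
      intro z hz z' hz' hzz' hzx
      rw [hzx] at hzz'
      rcases hcov z' (by simpa using hz') with h1 | h1 | h1
      · rw [h1] at hzz'; exact absurd hzz'.symm hax
      · exact h1
      · rw [h1] at hzz'; exact absurd hzz' hxy
    exact hux (no_adj_extract hc (fun z => z = x) hstep (by simpa using hx) (by simpa using hu) rfl)
  · by_contra hay
    have hstep : ∀ z ∈ (↑F : Set V), ∀ z' ∈ (↑F : Set V), G.Adj z z' → z = y → z' = y := by
      intro z hz z' hz' hzz' hzy
      rw [hzy] at hzz'
      rcases hcov z' (by simpa using hz') with h1 | h1 | h1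
      · rw [h1] at hzz'; exact absurd hzz'.symm hay
      · rw [h1] at hzz'; exact absurd hzz'.symm hxy
      · exact h1
    exact huy (no_adj_extract hc (fun z => z = y) hstep (by simpa using hy) (by simpa using hu) rfl)

lemma kempe_pair_pair {F : Finset V} (hc : ConnSet G F) {a b x y : V}
    (ha : a ∈ F) (hb : b ∈ F) (hx : x ∈ F) (hy : y ∈ F)
    (hcov : ∀ z ∈ F, z = a ∨ z = b ∨ z = x ∨ z = y)
    (hab' : a ≠ b) (hxy' : x ≠ y) (hax' : a ≠ x) (hay' : a ≠ y) (hbx' : b ≠ x) (hby' : b ≠ y)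
    (hab : ¬ G.Adj a b) (hxy : ¬ G.Adj x y) (hax : ¬ G.Adj a x) :
    G.Adj a y ∧ G.Adj b x ∧ G.Adj b y := by
  have hay : G.Adj a y := by
    by_contra hay
    have hstep : ∀ z ∈ (↑F : Set V), ∀ z' ∈ (↑F : Set V), G.Adj z z' → z = a → z' = a := by
      intro z hz z' hz' hzz' hza
      rw [hza] at hzz'
      rcases hcov z' (by simpa using hz') with h1 | h1 | h1 | h1
      · exact h1
      · rw [h1] at hzz'; exact absurd hzz' hab
      · rw [h1] at hzz'; exact absurd hzz' hax
      · rw [h1] at hzz'; exact absurd hzz' hay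
    exact hax' (no_adj_extract hc (fun z => z = a) hstep (by simpa using ha) (by simpa using hx) rfl).symm
  have hbx : G.Adj b x := by
    by_contra hbx
    have hstep : ∀ z ∈ (↑F : Set V), ∀ z' ∈ (↑F : Set V), G.Adj z z' → z = x → z' = x := by
      intro z hz z' hz' hzz' hzx
      rw [hzx] at hzz'
      rcases hcov z' (by simpa using hz') with h1 | h1 | h1 | h1
      · rw [h1] at hzz'; exact absurd hzz'.symm hax
      · rw [h1] at hzz'; exact absurd hzz'.symm hbx
      · exact h1
      · rw [h1] at hzz'; exact absurd hzz' hxy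
    exact hax' (no_adj_extract hc (fun z => z = x) hstep (by simpa using hx) (by simpa using ha) rfl)
  refine ⟨hay, hbx, ?_⟩
  by_contra hby
  have hstep : ∀ z ∈ (↑F : Set V), ∀ z' ∈ (↑F : Set V), G.Adj z z' →
      (z = a ∨ z = y) → (z' = a ∨ z' = y) := by
    intro z hz z' hz' hzz' hP
    rcases hP with hza | hzy
    · rw [hza] at hzz'
      rcases hcov z' (by simpa using hz') with h1 | h1 | h1 | h1
      · exact Or.inl h1
      · rw [h1] at hzz'; exact absurd hzz' hab
      · rw [h1] at hzz'; exact absurd hzz' hax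
      · exact Or.inr h1
    · rw [hzy] at hzz'
      rcases hcov z' (by simpa using hz') with h1 | h1 | h1 | h1
      · exact Or.inl h1
      · rw [h1] at hzz'; exact absurd hzz'.symm hby
      · rw [h1] at hzz'; exact absurd hzz'.symm hxy
      · exact Or.inr h1
  rcases no_adj_extract hc (fun z => z = a ∨ z = y) hstep (by simpa using ha) (by simpa using hb)
      (Or.inl rfl) with h | h
  · exact hab' h.symm
  · exact hby' h

lemma exists_injOn_of_card_le {α : Type*} [DecidableEq α] {s t : Finset α} (h : s.card ≤ t.card) :
    ∃ f : α → α, Set.InjOn f ↑s ∧ ∀ x ∈ s, f x ∈ t := by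
  obtain ⟨t', ht't, ht'⟩ := Finset.exists_subset_card_eq h
  have e := Finset.equivOfCardEq ht'.symm
  refine ⟨fun x => if hx : x ∈ s then (e ⟨x, hx⟩ : α) else x, ?_, ?_⟩
  · intro x hx y hy hxy
    simp only [Set.mem_setOf_eq, Finset.mem_coe] at hx hy
    simp only [dif_pos hx, dif_pos hy] at hxy
    have := e.injective (Subtype.ext hxy)
    exact congrArg Subtype.val this
  · intro x hx
    simp only [dif_pos hx]
    exact ht't (e ⟨x, hx⟩).2

lemma build_minor (a : V) (Us P Q : Finset V) (pv h : V → V)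
    (hUs : ∀ u ∈ Us, ∀ v, v ≠ u → G.Adj u v)
    (hPcl : ∀ v ∈ P, ∀ w ∈ P, v ≠ w → G.Adj v w)
    (haP : ∀ v ∈ P, G.Adj a v)
    (haQ : ∀ w ∈ Q, G.Adj a (pv w))
    (hPQ : ∀ v ∈ P, ∀ w ∈ Q, G.Adj v (pv w))
    (hPQ2 : ∀ v ∈ P, ∀ w ∈ Q, G.Adj (pv v) (pv w))
    (hh : ∀ w ∈ Q, h w ∈ P) (hhinj : Set.InjOn h ↑Q)
    (hpvinj : Set.InjOn pv ↑(P ∪ Q))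
    (haUs : a ∉ Us) (haP' : a ∉ P)
    (hUsP : Disjoint Us P) (hPQdisj : Disjoint P Q)
    (hpvS : ∀ w ∈ P ∪ Q, pv w ∉ Us ∧ pv w ∉ P ∧ pv w ≠ a ∧ pv w ∉ Q) :
    ∃ K : Finset (Finset V), IsShallowCliqueMinor G K ∧
      K.card = 1 + Us.card + P.card + Q.card := by
  classical
  set K1 : Finset (Finset V) := Us.image (fun u => ({u} : Finset V)) with hK1
  set K2 : Finset (Finset V) := P.image (fun v => ({v} : Finset V)) with hK2
  set K3 : Finset (Finset V) := Q.image (fun w => ({pv w, pv (h w)} : Finset V)) with hK3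
  set K : Finset (Finset V) := insert {a} (K1 ∪ K2 ∪ K3) with hK
  -- basic distinctness facts
  have hQmemPQ : ∀ w ∈ Q, w ∈ P ∪ Q := fun w hw => Finset.mem_union_right _ hw
  have hPmemPQ : ∀ v ∈ P, v ∈ P ∪ Q := fun v hv => Finset.mem_union_left _ hv
  have hne_pvhw : ∀ w ∈ Q, pv w ≠ pv (h w) := by
    intro w hw heq
    have : w = h w := hpvinj (by simpa using hQmemPQ w hw) (by simpa using hPmemPQ _ (hh w hw)) heq
    exact (Finset.disjoint_left.mp hPQdisj (this ▸ hh w hw)) hw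
  -- membership characterization
  have hmemK : ∀ A, A ∈ K ↔ A = {a} ∨ (∃ u ∈ Us, A = {u}) ∨ (∃ v ∈ P, A = {v}) ∨
      (∃ w ∈ Q, A = {pv w, pv (h w)}) := by
    intro A
    simp only [hK, hK1, hK2, hK3, Finset.mem_insert, Finset.mem_union, Finset.mem_image]
    constructor
    · rintro (h1 | (⟨u, hu, rfl⟩ | ⟨v, hv, rfl⟩) | ⟨w, hw, rfl⟩)
      · exact Or.inl h1
      · exact Or.inr (Or.inl ⟨u, hu, rfl⟩)
      · exact Or.inr (Or.inr (Or.inl ⟨v, hv, rfl⟩))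
      · exact Or.inr (Or.inr (Or.inr ⟨w, hw, rfl⟩))
    · rintro (h1 | ⟨u, hu, rfl⟩ | ⟨v, hv, rfl⟩ | ⟨w, hw, rfl⟩)
      · exact Or.inl h1
      · exact Or.inr (Or.inl (Or.inl ⟨u, hu, rfl⟩))
      · exact Or.inr (Or.inl (Or.inr ⟨v, hv, rfl⟩))
      · exact Or.inr (Or.inr ⟨w, hw, rfl⟩)
  refine ⟨K, ⟨⟨?_, ?_, ?_⟩, ?_⟩, ?_⟩
  · -- nonempty
    intro A hA
    rcases (hmemK A).mp hA with rfl | ⟨u, _, rfl⟩ | ⟨v, _, rfl⟩ | ⟨w, _, rfl⟩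
    · exact ⟨a, by simp⟩
    · exact ⟨u, by simp⟩
    · exact ⟨v, by simp⟩
    · exact ⟨pv w, by simp⟩
  · -- connected
    intro A hA
    rcases (hmemK A).mp hA with rfl | ⟨u, _, rfl⟩ | ⟨v, _, rfl⟩ | ⟨w, hw, rfl⟩
    · exact connSet_single a
    · exact connSet_single u
    · exact connSet_single v
    · exact connSet_pair (hPQ2 (h w) (hh w hw) w hw).symm
  · -- pairwise disjoint and adjacent
    intro A hA B hB hAB
    rcases (hmemK A).mp hA with rfl | ⟨u, hu, rfl⟩ | ⟨v, hv, rfl⟩ | ⟨w, hw, rfl⟩ <;>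
      rcases (hmemK B).mp hB with h2 | ⟨u', hu', h2⟩ | ⟨v', hv', h2⟩ | ⟨w', hw', h2⟩ <;>
      subst h2
    · exact absurd rfl hAB
    · have hau : a ≠ u' := fun h => haUs (h ▸ hu')
      constructor
      · simp [Finset.disjoint_left, hau]
      · exact ⟨a, by simp, u', by simp, (hUs u' hu' a hau).symm⟩
    · have hav : a ≠ v' := fun h => haP' (h ▸ hv')
      constructor
      · simp [Finset.disjoint_left, hav]
      · exact ⟨a, by simp, v', by simp, haP v' hv'⟩
    · constructor
      · have h1 := (hpvS w' (hQmemPQ w' hw')).2.2.1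
        have h2 := (hpvS (h w') (hPmemPQ _ (hh w' hw'))).2.2.1
        simp [Finset.disjoint_left]
        exact ⟨fun hq => h1 hq.symm, fun hq => h2 hq.symm⟩
      · exact ⟨a, by simp, pv w', by simp, haQ w' hw'⟩
    · have hau : u ≠ a := fun h => haUs (h ▸ hu)
      constructor
      · simp [Finset.disjoint_left, hau]
      · exact ⟨u, by simp, a, by simp, hUs u hu a (Ne.symm hau)⟩
    · have huu : u ≠ u' := fun h => hAB (by rw [h])
      constructor
      · simp [Finset.disjoint_left, huu]
      · exact ⟨u, by simp, u', by simp, hUs u hu u' (Ne.symm huu)⟩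
    · have huv : u ≠ v' := fun h => (Finset.disjoint_left.mp hUsP (h ▸ hu)) hv'
      constructor
      · simp [Finset.disjoint_left, huv]
      · exact ⟨u, by simp, v', by simp, hUs u hu v' (Ne.symm huv)⟩
    · have h1 : pv w' ≠ u := fun h => (hpvS w' (hQmemPQ w' hw')).1 (h ▸ hu)
      have h2 : pv (h w') ≠ u := fun hq => (hpvS (h w') (hPmemPQ _ (hh w' hw'))).1 (hq ▸ hu)
      constructor
      · simp [Finset.disjoint_left]
        exact ⟨fun hq => h1 hq.symm, fun hq => h2 hq.symm⟩
      · exact ⟨u, by simp, pv w', by simp, hUs u hu (pv w') h1⟩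
    · have hav : v ≠ a := fun h => haP' (h ▸ hv)
      constructor
      · simp [Finset.disjoint_left, hav]
      · exact ⟨v, by simp, a, by simp, (haP v hv).symm⟩
    · have huv : v ≠ u' := fun h => (Finset.disjoint_left.mp hUsP hu') (h ▸ hv)
      constructor
      · simp [Finset.disjoint_left, huv]
      · exact ⟨v, by simp, u', by simp, (hUs u' hu' v huv).symm⟩
    · have hvv : v ≠ v' := fun h => hAB (by rw [h])
      constructor
      · simp [Finset.disjoint_left, hvv]
      · exact ⟨v, by simp, v', by simp, hPcl v hv v' hv' hvv⟩
    · have h1 : pv w' ≠ v := fun h => (hpvS w' (hQmemPQ w' hw')).2.1 (h ▸ hv)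
      have h2 : pv (h w') ≠ v := fun hq => (hpvS (h w') (hPmemPQ _ (hh w' hw'))).2.1 (hq ▸ hv)
      constructor
      · simp [Finset.disjoint_left]
        exact ⟨fun hq => h1 hq.symm, fun hq => h2 hq.symm⟩
      · exact ⟨v, by simp, pv w', by simp, hPQ v hv w' hw'⟩
    · have h1 := (hpvS w (hQmemPQ w hw)).2.2.1
      have h2 := (hpvS (h w) (hPmemPQ _ (hh w hw))).2.2.1
      constructor
      · simp [Finset.disjoint_left, h1, h2]
      · exact ⟨pv w, by simp, a, by simp, (haQ w hw).symm⟩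
    · have h1 : pv w ≠ u' := fun hq => (hpvS w (hQmemPQ w hw)).1 (hq ▸ hu')
      have h2 : pv (h w) ≠ u' := fun hq => (hpvS (h w) (hPmemPQ _ (hh w hw))).1 (hq ▸ hu')
      constructor
      · simp [Finset.disjoint_left, h1, h2]
      · exact ⟨pv w, by simp, u', by simp, (hUs u' hu' (pv w) h1).symm⟩
    · have h1 : pv w ≠ v' := fun hq => (hpvS w (hQmemPQ w hw)).2.1 (hq ▸ hv')
      have h2 : pv (h w) ≠ v' := fun hq => (hpvS (h w) (hPmemPQ _ (hh w hw))).2.1 (hq ▸ hv')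
      constructor
      · simp [Finset.disjoint_left, h1, h2]
      · exact ⟨pv w, by simp, v', by simp, (hPQ v' hv' w hw).symm⟩
    · -- two 2-sets
      have hww : w ≠ w' := by
        rintro rfl; exact hAB rfl
      have hne1 : pv w ≠ pv w' := fun hq => hww
        (hpvinj (by simpa using hQmemPQ w hw) (by simpa using hQmemPQ w' hw') hq)
      have hne2 : pv w ≠ pv (h w') := fun hq => by
        have : w = h w' := hpvinj (by simpa using hQmemPQ w hw)
          (by simpa using hPmemPQ _ (hh w' hw')) hq
        exact (Finset.disjoint_left.mp hPQdisj (this ▸ hh w' hw')) hw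
      have hne3 : pv (h w) ≠ pv w' := fun hq => by
        have : h w = w' := hpvinj (by simpa using hPmemPQ _ (hh w hw))
          (by simpa using hQmemPQ w' hw') hq
        exact (Finset.disjoint_left.mp hPQdisj (hh w hw)) (this ▸ hw')
      have hne4 : pv (h w) ≠ pv (h w') := fun hq => hww (hhinj (by simpa using hw)
        (by simpa using hw') (hpvinj (by simpa using hPmemPQ _ (hh w hw))
          (by simpa using hPmemPQ _ (hh w' hw')) hq))
      constructor
      · simp [Finset.disjoint_left]
        exact ⟨⟨hne1, hne2⟩, ⟨hne3, hne4⟩⟩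
      · exact ⟨pv (h w), by simp, pv w', by simp, hPQ2 (h w) (hh w hw) w' hw'⟩
  · -- shallow
    intro A hA
    rcases (hmemK A).mp hA with rfl | ⟨u, _, rfl⟩ | ⟨v, _, rfl⟩ | ⟨w, _, rfl⟩
    · simp
    · simp
    · simp
    · exact Finset.card_insert_le _ _ |>.trans (by simp)
  · -- cardinality
    have hinj1 : Set.InjOn (fun u => ({u} : Finset V)) ↑Us :=
      fun x _ y _ hxy => Finset.singleton_injective hxy
    have hinj2 : Set.InjOn (fun u => ({u} : Finset V)) ↑P :=
      fun x _ y _ hxy => Finset.singleton_injective hxy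
    have hinj3 : Set.InjOn (fun w => ({pv w, pv (h w)} : Finset V)) ↑Q := by
      intro x hx y hy hxy
      simp only [Finset.mem_coe] at hx hy
      have hxy' : ({pv x, pv (h x)} : Finset V) = {pv y, pv (h y)} := hxy
      have hmem : pv x ∈ ({pv y, pv (h y)} : Finset V) := by rw [← hxy']; simp
      simp only [Finset.mem_insert, Finset.mem_singleton] at hmem
      rcases hmem with hq | hq
      · exact hpvinj (by simpa using hQmemPQ x hx) (by simpa using hQmemPQ y hy) hq
      · exfalso
        have : x = h y := hpvinj (by simpa using hQmemPQ x hx)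
          (by simpa using hPmemPQ _ (hh y hy)) hq
        exact (Finset.disjoint_left.mp hPQdisj (this ▸ hh y hy)) hx
    have hd12 : Disjoint K1 K2 := by
      rw [Finset.disjoint_left]
      rintro A hA1 hA2
      simp only [hK1, hK2, Finset.mem_image] at hA1 hA2
      obtain ⟨u, hu, rfl⟩ := hA1
      obtain ⟨v, hv, hv2⟩ := hA2
      have := Finset.singleton_injective hv2
      exact (Finset.disjoint_left.mp hUsP (this ▸ hu)) hv
    have hcard2K3 : ∀ A ∈ K3, A.card = 2 := by
      intro A hA
      simp only [hK3, Finset.mem_image] at hA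
      obtain ⟨w, hw, rfl⟩ := hA
      rw [Finset.card_insert_of_notMem (by simp [hne_pvhw w hw]), Finset.card_singleton]
    have hd123 : Disjoint (K1 ∪ K2) K3 := by
      rw [Finset.disjoint_left]
      rintro A hA1 hA3
      have h2 := hcard2K3 A hA3
      rcases Finset.mem_union.mp hA1 with hA | hA <;>
      · simp only [hK1, hK2, Finset.mem_image] at hA
        obtain ⟨u, _, rfl⟩ := hA
        simp at h2
    have hanotin : ({a} : Finset V) ∉ K1 ∪ K2 ∪ K3 := by
      intro hmem
      rcases Finset.mem_union.mp hmem with hmem | hmem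
      · rcases Finset.mem_union.mp hmem with hmem | hmem <;>
          simp only [hK1, hK2, Finset.mem_image] at hmem
        · obtain ⟨u, hu, hu2⟩ := hmem
          exact haUs ((Finset.singleton_injective hu2) ▸ hu)
        · obtain ⟨v, hv, hv2⟩ := hmem
          exact haP' ((Finset.singleton_injective hv2) ▸ hv)
      · have := hcard2K3 _ hmem
        simp at this
    rw [hK, Finset.card_insert_of_notMem hanotin, Finset.card_union_of_disjoint hd123,
      Finset.card_union_of_disjoint hd12, hK1, hK2, hK3,
      Finset.card_image_of_injOn hinj1, Finset.card_image_of_injOn hinj2,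
      Finset.card_image_of_injOn hinj3]
    ring

end Helpers

/-- no antitriangles plus a Kempe-coloring of size `k` force
`k`-connectivity or a shallow clique minor of size `k`. -/
theorem kempe_no_antitriangle_connected_or_shallow {V : Type*} [Fintype V] [DecidableEq V]
    (G : SimpleGraph V) (hat : HasNoAntitriangle G)
    (c : Finset (Finset V)) (k : ℕ) (hk : IsKempe G c) (hcard : c.card = k) :
    (Fintype.card V > k ∧ ∀ S : Finset V, S.card < k →
        (G.induce {v : V | v ∉ S}).Connected) ∨
    ∃ K : Finset (Finset V), IsShallowCliqueMinor G K ∧ K.card = k := by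
  classical
  obtain ⟨⟨hne, hdisj, hcov, hanti⟩, hconn2⟩ := hk
  -- every class has at most 2 elements
  have hcard2 : ∀ A ∈ c, A.card ≤ 2 := by
    intro A hA
    by_contra hgt
    push_neg at hgt
    obtain ⟨B, hBA, hB3⟩ := Finset.exists_subset_card_eq hgt
    exact hat ⟨B, hB3, fun x hx y hy => hanti A hA x (hBA hx) y (hBA hy)⟩
  choose cl hcl1 hcl2 using hcov
  have hclu : ∀ v : V, ∀ A ∈ c, v ∈ A → A = cl v := by
    intro v A hA hvA
    by_contra hne'
    exact (Finset.disjoint_left.mp (hdisj A hA _ (hcl1 v) hne')) hvA (hcl2 v)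
  have hclcard : ∀ v : V, (cl v).card = 1 ∨ (cl v).card = 2 := by
    intro v
    have h1 : 1 ≤ (cl v).card := Finset.card_pos.mpr ⟨v, hcl2 v⟩
    have h2 := hcard2 _ (hcl1 v)
    omega
  have hpair : ∀ v : V, (cl v).card = 2 → ∃ p, p ≠ v ∧ cl v = {v, p} := by
    intro v h2
    obtain ⟨x, y, hxy, hset⟩ := Finset.card_eq_two.mp h2
    have hv : v = x ∨ v = y := by
      have := hcl2 v; rw [hset] at this; simpa using this
    rcases hv with rfl | rfl
    · exact ⟨y, Ne.symm hxy, hset⟩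
    · exact ⟨x, hxy, by rw [hset, Finset.pair_comm]⟩
  have hsingcl : ∀ v : V, (cl v).card = 1 → cl v = {v} := by
    intro v h1
    obtain ⟨x, hx⟩ := Finset.card_eq_one.mp h1
    have := hcl2 v; rw [hx] at this ⊢
    simp at this; rw [this]
  have anti3 : ∀ x y z : V, x ≠ y → x ≠ z → y ≠ z →
      ¬G.Adj x y → ¬G.Adj x z → ¬G.Adj y z → False := by
    intro x y z hxy hxz hyz h1 h2 h3
    apply hat
    refine ⟨{x, y, z}, ?_, ?_⟩
    · rw [Finset.card_insert_of_notMem (by simp [hxy, hxz]),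
        Finset.card_insert_of_notMem (by simp [hyz]), Finset.card_singleton]
    · intro u hu w hw
      simp only [Finset.mem_insert, Finset.mem_singleton] at hu hw
      rcases hu with rfl | rfl | rfl <;> rcases hw with rfl | rfl | rfl <;> intro hadj <;>
        first
          | exact G.irrefl hadj
          | exact h1 hadj
          | exact h2 hadj
          | exact h3 hadj
          | exact h1 hadj.symm
          | exact h2 hadj.symm
          | exact h3 hadj.symm
  -- universal vertices
  have huniv : ∀ u, cl u = {u} → ∀ v, v ≠ u → G.Adj u v := by
    intro u hu v hvu
    have hclne : cl v ≠ cl u := by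
      intro hq
      have := hcl2 v
      rw [hq, hu] at this
      simp at this; exact hvu this
    have hconn := hconn2 (cl u) (hcl1 u) (cl v) (hcl1 v) (Ne.symm hclne)
    rcases hclcard v with h1 | h2
    · have hv1 := hsingcl v h1
      rw [hu, hv1] at hconn
      apply adj_of_conn_two hconn (by simp) (by simp) (by intro z hz; simpa using hz) hvu.symm
    · obtain ⟨p, hpv, hclv⟩ := hpair v h2
      have hup : u ≠ p := by
        intro hq
        have hpcl : u ∈ cl v := by rw [hclv, hq]; simp
        exact hclne (hclu u (cl v) (hcl1 v) hpcl)
      rw [hu, hclv] at hconn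
      have hnadj : ¬ G.Adj v p := by
        apply hanti (cl v) (hcl1 v) v (hcl2 v) p
        rw [hclv]; simp
      exact (kempe_single_pair hconn (by simp) (by simp) (by simp)
        (by intro z hz; simp at hz; tauto) hvu.symm hup hnadj).1
  -- case: all classes are singletons
  by_cases hall1 : ∀ A ∈ c, A.card = 1
  · right
    refine ⟨c, ⟨⟨fun A hA => hne A hA, ?_, ?_⟩, ?_⟩, hcard⟩
    · intro A hA
      obtain ⟨x, hx⟩ := Finset.card_eq_one.mp (hall1 A hA)
      rw [hx]; exact connSet_single x
    · intro A hA B hB hAB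
      refine ⟨hdisj A hA B hB hAB, ?_⟩
      obtain ⟨x, hx⟩ := Finset.card_eq_one.mp (hall1 A hA)
      obtain ⟨y, hy⟩ := Finset.card_eq_one.mp (hall1 B hB)
      have hxy : x ≠ y := by rintro rfl; exact hAB (by rw [hx, hy])
      have hconn := hconn2 A hA B hB hAB
      rw [hx, hy] at hconn
      have hadj : G.Adj x y := adj_of_conn_two hconn (by simp) (by simp)
        (by intro z hz; simpa using hz) hxy
      exact ⟨x, by rw [hx]; simp, y, by rw [hy]; simp, hadj⟩
    · intro A hA; rw [hall1 A hA]; omega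
  push_neg at hall1
  obtain ⟨A₀, hA₀c, hA₀⟩ := hall1
  have hA₀2 : A₀.card = 2 := by
    have h1 : 1 ≤ A₀.card := Finset.card_pos.mpr (hne A₀ hA₀c)
    have h2 := hcard2 A₀ hA₀c
    omega
  have hVcard : Fintype.card V = ∑ A ∈ c, A.card := by
    have huniv_eq : (Finset.univ : Finset V) = c.biUnion (fun A => A) := by
      ext v
      simp only [Finset.mem_univ, Finset.mem_biUnion, true_iff]
      exact ⟨cl v, hcl1 v, hcl2 v⟩
    rw [← Finset.card_univ, huniv_eq,
      Finset.card_biUnion (fun A hA B hB hAB => hdisj A hA B hB hAB)]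
  have hVgt : Fintype.card V > k := by
    have h1 : ∑ A ∈ c, 1 < ∑ A ∈ c, A.card :=
      Finset.sum_lt_sum (fun A hA => Finset.one_le_card.mpr (hne A hA))
        ⟨A₀, hA₀c, by omega⟩
    rw [Finset.sum_const, smul_eq_mul, mul_one, hcard] at h1
    omega
  by_cases hC : ∀ S : Finset V, S.card < k →
      (G.induce {v : V | v ∉ S}).Connected
  · exact Or.inl ⟨hVgt, hC⟩
  right
  push_neg at hC
  obtain ⟨S, hScard, hSdisc⟩ := hC
  have memT : ∀ v : V, v ∉ S → v ∈ {v : V | v ∉ S} := fun v hv => hv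
  have rs : ∀ {u v : V} (hu : u ∉ S) (hv : v ∉ S), G.Adj u v →
      (G.induce {x : V | x ∉ S}).Reachable ⟨u, hu⟩ ⟨v, hv⟩ :=
    fun hu hv h => reach_step (T := {x : V | x ∉ S}) hu hv h
  -- all singleton-class vertices are in S
  have hsingS : ∀ u, cl u = {u} → u ∈ S := by
    intro u hu
    by_contra huS
    apply hSdisc
    apply connected_of_hub (T := {v : V | v ∉ S}) (r := u) huS
    intro v hv
    by_cases hvu : v = u
    · subst hvu
      have : (⟨v, hv⟩ : {x : V | x ∉ S}) = ⟨v, huS⟩ := Subtype.ext rfl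
      rw [this]
    · exact rs hv huS (huniv u hu v hvu).symm
  -- there is a class avoiding S
  haveI : Nonempty V := ⟨(hne A₀ hA₀c).choose⟩
  have hex : ∃ A ∈ c, ∀ x ∈ A, x ∉ S := by
    by_contra hno
    push_neg at hno
    try simp only [not_not] at hno
    choose g hg1 hg2 using hno
    have hle : c.card ≤ S.card := by
      apply Finset.card_le_card_of_injOn
        (fun A => if hA : A ∈ c then g A hA else Classical.arbitrary V)
      · intro A hA
        simp only [Finset.mem_coe] at hA
        simp only [dif_pos hA]; exact hg2 A hA
      · intro A hA B hB hAB
        simp only [Finset.mem_coe] at hA hB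
        simp only [dif_pos hA, dif_pos hB] at hAB
        by_contra hne'
        exact (Finset.disjoint_left.mp (hdisj A hA B hB hne')) (hg1 A hA) (hAB ▸ hg1 B hB)
    omega
  obtain ⟨C₀, hC₀c, hC₀S⟩ := hex
  have hC₀2 : C₀.card = 2 := by
    rcases (by
      have h1 : 1 ≤ C₀.card := Finset.card_pos.mpr (hne C₀ hC₀c)
      have h2 := hcard2 C₀ hC₀c
      omega : C₀.card = 1 ∨ C₀.card = 2) with h1 | h2
    · exfalso
      obtain ⟨u, hu⟩ := Finset.card_eq_one.mp h1
      have hucl : C₀ = cl u := hclu u C₀ hC₀c (by rw [hu]; simp)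
      have : cl u = {u} := by rw [← hucl, hu]
      exact hC₀S u (by rw [hu]; simp) (hsingS u this)
    · exact h2
  obtain ⟨a, b, hab, hC₀ab⟩ := Finset.card_eq_two.mp hC₀2
  have haC₀ : a ∈ C₀ := by rw [hC₀ab]; simp
  have hbC₀ : b ∈ C₀ := by rw [hC₀ab]; simp
  have haS : a ∉ S := hC₀S a haC₀
  have hbS : b ∉ S := hC₀S b hbC₀
  have hcla : C₀ = cl a := hclu a C₀ hC₀c haC₀
  have hclb : C₀ = cl b := hclu b C₀ hC₀c hbC₀
  have hnadjab : ¬ G.Adj a b := hanti C₀ hC₀c a haC₀ b hbC₀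
  -- partner data for vertices outside S ∪ {a,b}
  have hvfact : ∀ v : V, ∃ p : V, (v ∉ S ∧ v ≠ a ∧ v ≠ b) →
      p ≠ v ∧ cl v = {v, p} ∧ p ≠ a ∧ p ≠ b ∧ cl v ≠ C₀ ∧ ¬ G.Adj v p := by
    intro v
    by_cases hcond : v ∉ S ∧ v ≠ a ∧ v ≠ b
    · obtain ⟨hvS, hva, hvb⟩ := hcond
      have hclvC₀ : cl v ≠ C₀ := by
        intro hq
        have := hcl2 v
        rw [hq, hC₀ab] at this
        simp at this
        rcases this with rfl | rfl
        · exact hva rfl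
        · exact hvb rfl
      have h2 : (cl v).card = 2 := by
        rcases hclcard v with h1 | h2
        · exact absurd (hsingS v (hsingcl v h1)) hvS
        · exact h2
      obtain ⟨p, hpv, hclv⟩ := hpair v h2
      have hpa : p ≠ a := by
        intro hq
        apply hclvC₀
        rw [hcla]
        exact (hclu a (cl v) (hcl1 v) (by rw [hclv, hq]; simp)).symm ▸ rfl
      have hpb : p ≠ b := by
        intro hq
        apply hclvC₀
        rw [hclb]
        exact (hclu b (cl v) (hcl1 v) (by rw [hclv, hq]; simp)).symm ▸ rfl
      have hnadj : ¬ G.Adj v p :=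
        hanti (cl v) (hcl1 v) v (hcl2 v) p (by rw [hclv]; simp)
      exact ⟨p, fun _ => ⟨hpv, hclv, hpa, hpb, hclvC₀, hnadj⟩⟩
    · exact ⟨v, fun hq => absurd hq hcond⟩
  choose pv hpv using hvfact
  -- pair-pair lemma
  have hPP : ∀ x p y q : V, p ≠ x → q ≠ y → cl x = {x, p} → cl y = {y, q} →
      cl x ≠ cl y → ¬ G.Adj x y →
      G.Adj x q ∧ G.Adj p y ∧ G.Adj p q := by
    intro x p y q hpx hqy hx hy hne' hnadj
    have hdisjxy : Disjoint (cl x) (cl y) := hdisj _ (hcl1 x) _ (hcl1 y) hne'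
    have hpmem : p ∈ cl x := by rw [hx]; simp
    have hqmem : q ∈ cl y := by rw [hy]; simp
    have hxy : x ≠ y := fun hq =>
      (Finset.disjoint_left.mp hdisjxy (hcl2 x)) (hq ▸ hcl2 y)
    have hxq : x ≠ q := fun hq =>
      (Finset.disjoint_left.mp hdisjxy (hcl2 x)) (hq ▸ hqmem)
    have hpy : p ≠ y := fun hq =>
      (Finset.disjoint_left.mp hdisjxy hpmem) (hq ▸ hcl2 y)
    have hpq : p ≠ q := fun hq =>
      (Finset.disjoint_left.mp hdisjxy hpmem) (hq ▸ hqmem)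
    have hconn := hconn2 _ (hcl1 x) _ (hcl1 y) hne'
    have hnxp : ¬ G.Adj x p := hanti (cl x) (hcl1 x) x (hcl2 x) p hpmem
    have hnyq : ¬ G.Adj y q := hanti (cl y) (hcl1 y) y (hcl2 y) q hqmem
    apply kempe_pair_pair hconn
      (Finset.mem_union_left _ (hcl2 x)) (Finset.mem_union_left _ hpmem)
      (Finset.mem_union_right _ (hcl2 y)) (Finset.mem_union_right _ hqmem)
      ?_ hpx.symm hqy.symm hxy (fun hq => hxq hq) hpy hpq hnxp hnyq hnadj
    intro z hz
    rw [Finset.mem_union, hx, hy] at hz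
    simp only [Finset.mem_insert, Finset.mem_singleton] at hz
    tauto
  -- each outside vertex is adjacent to a or b
  have hC_or : ∀ v, v ∉ S → v ≠ a → v ≠ b → (G.Adj a v ∨ G.Adj b v) := by
    intro v hvS hva hvb
    by_contra hno
    push_neg at hno
    obtain ⟨hna, hnb⟩ := hno
    obtain ⟨hpv1, hpv2, _, _, hclvC₀, _⟩ := hpv v ⟨hvS, hva, hvb⟩
    have hclaeq : cl a = {a, b} := by rw [← hcla, hC₀ab]
    have := (hPP v (pv v) a b hpv1 hab.symm hpv2 hclaeq
      (by rw [← hcla]; exact hclvC₀) (fun hq => hna hq.symm)).1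
    exact hnb this.symm
  -- no vertex outside is adjacent to both a and b
  have hnotboth : ∀ w, w ∉ S → w ≠ a → w ≠ b → G.Adj a w → G.Adj b w → False := by
    intro w hwS hwa hwb hadja hadjb
    apply hSdisc
    apply connected_of_hub (T := {v : V | v ∉ S}) (r := a) haS
    intro v hv
    have hreachb : (G.induce {v : V | v ∉ S}).Reachable ⟨b, hbS⟩ ⟨a, haS⟩ :=
      (rs hbS hwS hadjb).trans (rs hwS haS hadja.symm)
    by_cases hva : v = a
    · subst hva
      have : (⟨v, hv⟩ : {x : V | x ∉ S}) = ⟨v, haS⟩ := Subtype.ext rfl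
      rw [this]
    · by_cases hvb : v = b
      · subst hvb
        have : (⟨v, hv⟩ : {x : V | x ∉ S}) = ⟨v, hbS⟩ := Subtype.ext rfl
        rw [this]; exact hreachb
      · rcases hC_or v hv hva hvb with h | h
        · exact rs hv haS h.symm
        · exact (rs hv hbS h.symm).trans hreachb
  -- the two sides
  set Za : Finset V := Finset.univ.filter (fun v => v ∉ S ∧ v ≠ a ∧ v ≠ b ∧ G.Adj a v) with hZa
  set Zb : Finset V := Finset.univ.filter (fun v => v ∉ S ∧ v ≠ a ∧ v ≠ b ∧ ¬ G.Adj a v) with hZb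
  have hZamem : ∀ v, v ∈ Za ↔ (v ∉ S ∧ v ≠ a ∧ v ≠ b ∧ G.Adj a v) := by
    intro v; rw [hZa]; simp
  have hZbmem : ∀ v, v ∈ Zb ↔ (v ∉ S ∧ v ≠ a ∧ v ≠ b ∧ ¬ G.Adj a v) := by
    intro v; rw [hZb]; simp
  have hZbb : ∀ v ∈ Zb, G.Adj b v := by
    intro v hv
    obtain ⟨h1, h2, h3, h4⟩ := (hZbmem v).mp hv
    rcases hC_or v h1 h2 h3 with h | h
    · exact absurd h h4
    · exact h
  have hZanb : ∀ v ∈ Za, ¬ G.Adj b v := by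
    intro v hv hq
    obtain ⟨h1, h2, h3, h4⟩ := (hZamem v).mp hv
    exact hnotboth v h1 h2 h3 h4 hq
  -- no edges between Za and Zb
  have hG : ∀ v ∈ Za, ∀ w ∈ Zb, ¬ G.Adj v w := by
    intro v hv w hw hadj
    obtain ⟨hv1, hv2, hv3, hv4⟩ := (hZamem v).mp hv
    obtain ⟨hw1, hw2, hw3, _⟩ := (hZbmem w).mp hw
    apply hSdisc
    apply connected_of_hub (T := {x : V | x ∉ S}) (r := a) haS
    have hreachb : (G.induce {x : V | x ∉ S}).Reachable ⟨b, hbS⟩ ⟨a, haS⟩ :=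
      ((rs hbS hw1 (hZbb w hw)).trans (rs hw1 hv1 hadj.symm)).trans
        (rs hv1 haS hv4.symm)
    intro t ht
    by_cases hta : t = a
    · subst hta
      have : (⟨t, ht⟩ : {x : V | x ∉ S}) = ⟨t, haS⟩ := Subtype.ext rfl
      rw [this]
    · by_cases htb : t = b
      · subst htb
        have : (⟨t, ht⟩ : {x : V | x ∉ S}) = ⟨t, hbS⟩ := Subtype.ext rfl
        rw [this]; exact hreachb
      · rcases hC_or t ht hta htb with h | h
        · exact rs ht haS h.symm
        · exact (rs ht hbS h.symm).trans hreachb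
  -- partner is in S
  have hpS : ∀ v, v ∉ S → v ≠ a → v ≠ b → pv v ∈ S := by
    intro v hvS hva hvb
    by_contra hpvS
    obtain ⟨hp1, hp2, hp3, hp4, hp5, hp6⟩ := hpv v ⟨hvS, hva, hvb⟩
    rcases hC_or v hvS hva hvb with h | h
    · -- v adj a, so v not adj b; missing edge v-b
      have hnvb : ¬ G.Adj v b := fun hq => hnotboth v hvS hva hvb h hq.symm
      have hclbeq : cl b = {b, a} := by rw [← hclb, hC₀ab, Finset.pair_comm]
      have h3 := hPP v (pv v) b a hp1 hab hp2 hclbeq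
        (by rw [← hclb]; exact hp5) hnvb
      exact hnotboth (pv v) hpvS hp3 hp4 h3.2.2.symm h3.2.1.symm
    · have hnva : ¬ G.Adj v a := fun hq => hnotboth v hvS hva hvb hq.symm h
      have hclaeq : cl a = {a, b} := by rw [← hcla, hC₀ab]
      have h3 := hPP v (pv v) a b hp1 hab.symm hp2 hclaeq
        (by rw [← hcla]; exact hp5) hnva
      exact hnotboth (pv v) hpvS hp3 hp4 h3.2.1.symm h3.2.2.symm
  -- counting: every class other than C₀ meets S in exactly one vertex
  have hsum : ∑ A ∈ c, (A ∩ S).card = S.card := by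
    have hSeq : S = c.biUnion (fun A => A ∩ S) := by
      ext x
      simp only [Finset.mem_biUnion, Finset.mem_inter]
      constructor
      · intro hx; exact ⟨cl x, hcl1 x, hcl2 x, hx⟩
      · rintro ⟨A, _, _, hx⟩; exact hx
    conv_rhs => rw [hSeq]
    rw [Finset.card_biUnion (fun A hA B hB hAB =>
      Finset.disjoint_of_subset_left Finset.inter_subset_left
        (Finset.disjoint_of_subset_right Finset.inter_subset_left (hdisj A hA B hB hAB)))]
  have hC₀S0 : (C₀ ∩ S).card = 0 := by
    rw [Finset.card_eq_zero]
    ext x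
    simp only [Finset.mem_inter, Finset.notMem_empty, iff_false, not_and]
    intro hx
    rw [hC₀ab] at hx
    simp at hx
    rcases hx with rfl | rfl
    · exact haS
    · exact hbS
  have hS_ge1 : ∀ A ∈ c, A ≠ C₀ → 1 ≤ (A ∩ S).card := by
    intro A hA hAne
    rw [Nat.one_le_iff_ne_zero, ← Nat.pos_iff_ne_zero, Finset.card_pos]
    have hcards : A.card = 1 ∨ A.card = 2 := by
      have h1 : 1 ≤ A.card := Finset.card_pos.mpr (hne A hA)
      have h2 := hcard2 A hA
      omega
    rcases hcards with h1 | h2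
    · obtain ⟨u, hu⟩ := Finset.card_eq_one.mp h1
      have hclueq : cl u = {u} := by
        rw [← hclu u A hA (by rw [hu]; simp), hu]
      exact ⟨u, Finset.mem_inter.mpr ⟨by rw [hu]; simp, hsingS u hclueq⟩⟩
    · by_contra hempty
      rw [Finset.not_nonempty_iff_eq_empty] at hempty
      have hnot : ∀ x, x ∈ A → x ∉ S := by
        intro x hxA hxS
        have hmem : x ∈ A ∩ S := Finset.mem_inter.mpr ⟨hxA, hxS⟩
        rw [hempty] at hmem; simp at hmem
      obtain ⟨x, y, hxy, hset⟩ := Finset.card_eq_two.mp h2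
      have hxA : x ∈ A := by rw [hset]; simp
      have hyA : y ∈ A := by rw [hset]; simp
      have hxa : x ≠ a := by
        rintro rfl
        exact hAne ((hclu x A hA hxA).trans hcla.symm)
      have hxb : x ≠ b := by
        rintro rfl
        exact hAne ((hclu x A hA hxA).trans hclb.symm)
      have hxS := hnot x hxA
      obtain ⟨hp1, hp2, _, _, _, _⟩ := hpv x ⟨hxS, hxa, hxb⟩
      have hApair : A = {x, pv x} := by rw [hclu x A hA hxA]; exact hp2
      have hpvS' := hpS x hxS hxa hxb
      have hmem : pv x ∈ A := by rw [hApair]; simp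
      rw [hset] at hmem; simp at hmem
      rcases hmem with hq | hq
      · exact hp1 hq
      · exact hnot y hyA (hq ▸ hpvS')
  have herasek : (c.erase C₀).card + 1 = k := by
    rw [Finset.card_erase_add_one hC₀c, hcard]
  have hS_one : ∀ A ∈ c, A ≠ C₀ → (A ∩ S).card = 1 := by
    intro A hA hAne
    by_contra hne1
    have h2 : 2 ≤ (A ∩ S).card := by
      have := hS_ge1 A hA hAne
      omega
    have hAe : A ∈ c.erase C₀ := Finset.mem_erase.mpr ⟨hAne, hA⟩
    have hlt : (c.erase C₀).card < ∑ B ∈ c.erase C₀, (B ∩ S).card := by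
      have h1 : ∑ B ∈ c.erase C₀, 1 < ∑ B ∈ c.erase C₀, (B ∩ S).card := by
        apply Finset.sum_lt_sum
        · intro B hB
          exact hS_ge1 B (Finset.mem_of_mem_erase hB) (Finset.ne_of_mem_erase hB)
        · exact ⟨A, hAe, by omega⟩
      rw [Finset.sum_const, smul_eq_mul, mul_one] at h1
      exact h1
    have hadd := Finset.add_sum_erase c (fun B => (B ∩ S).card) hC₀c
    simp only [hC₀S0, zero_add] at hadd
    rw [hadd, hsum] at hlt
    omega
  -- the sets
  set Us : Finset V := Finset.univ.filter (fun u => cl u = {u}) with hUs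
  have hUsmem : ∀ u, u ∈ Us ↔ cl u = {u} := by intro u; rw [hUs]; simp
  have hUsS : ∀ u ∈ Us, u ∈ S := fun u hu => hsingS u ((hUsmem u).mp hu)
  -- counting |Us| + |Za| + |Zb| + 1 = k
  have hZZdisj : Disjoint Za Zb := by
    rw [Finset.disjoint_left]
    intro v hv hv'
    exact ((hZbmem v).mp hv').2.2.2 ((hZamem v).mp hv).2.2.2
  have hUsZdisj : Disjoint Us (Za ∪ Zb) := by
    rw [Finset.disjoint_left]
    intro u hu hu'
    rcases Finset.mem_union.mp hu' with h | h
    · exact ((hZamem u).mp h).1 (hUsS u hu)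
    · exact ((hZbmem u).mp h).1 (hUsS u hu)
  have hZmem : ∀ v, v ∈ Za ∪ Zb ↔ (v ∉ S ∧ v ≠ a ∧ v ≠ b) := by
    intro v
    rw [Finset.mem_union, hZamem, hZbmem]
    constructor
    · rintro (⟨h1, h2, h3, _⟩ | ⟨h1, h2, h3, _⟩) <;> exact ⟨h1, h2, h3⟩
    · rintro ⟨h1, h2, h3⟩
      by_cases h4 : G.Adj a v
      · exact Or.inl ⟨h1, h2, h3, h4⟩
      · exact Or.inr ⟨h1, h2, h3, h4⟩
  have himg : (Us ∪ (Za ∪ Zb)).image cl = c.erase C₀ := by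
    ext A
    simp only [Finset.mem_image, Finset.mem_erase]
    constructor
    · rintro ⟨v, hv, rfl⟩
      refine ⟨?_, hcl1 v⟩
      rcases Finset.mem_union.mp hv with h | h
      · intro hq
        have h2 := (hUsmem v).mp h
        have h3 : C₀ = {v} := hq.symm.trans h2
        rw [h3] at hC₀2
        simp at hC₀2
      · obtain ⟨h1, h2, h3⟩ := (hZmem v).mp h
        intro hq
        have : v ∈ C₀ := by rw [← hq]; exact hcl2 v
        rw [hC₀ab] at this; simp at this
        rcases this with rfl | rfl
        · exact h2 rfl
        · exact h3 rfl
    · rintro ⟨hAne, hA⟩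
      have hcards : A.card = 1 ∨ A.card = 2 := by
        have h1 : 1 ≤ A.card := Finset.card_pos.mpr (hne A hA)
        have h2 := hcard2 A hA
        omega
      rcases hcards with h1 | h2
      · obtain ⟨u, hu⟩ := Finset.card_eq_one.mp h1
        have hclueq : cl u = {u} := by rw [← hclu u A hA (by rw [hu]; simp), hu]
        refine ⟨u, Finset.mem_union_left _ ((hUsmem u).mpr hclueq), ?_⟩
        rw [← hclu u A hA (by rw [hu]; simp)]
      · -- exactly one vertex in S, the other outside
        have hone := hS_one A hA hAne
        have hz : ∃ z ∈ A, z ∉ S := by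
          by_contra hq
          push_neg at hq
          have hAS : A ∩ S = A := Finset.inter_eq_left.mpr (fun z hz => hq z hz)
          rw [hAS] at hone
          omega
        obtain ⟨z, hzA, hzS⟩ := hz
        have hza : z ≠ a := by
          rintro rfl
          exact hAne ((hclu z A hA hzA).trans hcla.symm)
        have hzb : z ≠ b := by
          rintro rfl
          exact hAne ((hclu z A hA hzA).trans hclb.symm)
        exact ⟨z, Finset.mem_union_right _ ((hZmem z).mpr ⟨hzS, hza, hzb⟩),
          (hclu z A hA hzA).symm⟩
  have hinjcl : Set.InjOn cl ↑(Us ∪ (Za ∪ Zb)) := by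
    intro x hx y hy hxy
    have hx' := Finset.mem_union.mp (Finset.mem_coe.mp hx)
    have hy' := Finset.mem_union.mp (Finset.mem_coe.mp hy)
    have hxm : x ∈ cl y := hxy ▸ hcl2 x
    rcases hy' with hy1 | hy1
    · rw [(hUsmem y).mp hy1] at hxm; simpa using hxm
    · obtain ⟨hyS, hya, hyb⟩ := (hZmem y).mp hy1
      obtain ⟨hp1, hp2, _⟩ := hpv y ⟨hyS, hya, hyb⟩
      rw [hp2] at hxm
      simp only [Finset.mem_insert, Finset.mem_singleton] at hxm
      rcases hxm with rfl | hxeq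
      · rfl
      · exfalso
        have hpvyS : pv y ∈ S := hpS y hyS hya hyb
        have hxS : x ∈ S := by rw [hxeq]; exact hpvyS
        rcases hx' with hx1 | hx1
        · -- x ∈ Us : cl x = {x}, but cl x = cl y has card 2
          have h2 := (hUsmem x).mp hx1
          have e1 : cl y = cl (pv y) :=
            hclu (pv y) (cl y) (hcl1 y) (by rw [hp2]; simp)
          have e2 : cl y = {x} := by rw [e1, ← hxeq, h2]
          have hym : y ∈ ({x} : Finset V) := e2 ▸ hcl2 y
          simp only [Finset.mem_singleton] at hym
          apply hp1
          rw [← hxeq, ← hym]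
        · exact ((hZmem x).mp hx1).1 hxS
  have hcount : Us.card + Za.card + Zb.card + 1 = k := by
    have h1 : (Us ∪ (Za ∪ Zb)).card = (c.erase C₀).card := by
      rw [← himg, Finset.card_image_of_injOn hinjcl]
    rw [Finset.card_union_of_disjoint hUsZdisj, Finset.card_union_of_disjoint hZZdisj] at h1
    omega
  -- cross-class facts
  have hZprop : ∀ v ∈ Za ∪ Zb, v ∉ S ∧ v ≠ a ∧ v ≠ b := fun v hv => (hZmem v).mp hv
  have hpvfact : ∀ v ∈ Za ∪ Zb, pv v ≠ v ∧ cl v = {v, pv v} ∧ pv v ≠ a ∧ pv v ≠ b ∧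
      cl v ≠ C₀ ∧ ¬ G.Adj v (pv v) := fun v hv => hpv v (hZprop v hv)
  have hpvinS : ∀ v ∈ Za ∪ Zb, pv v ∈ S := by
    intro v hv
    obtain ⟨h1, h2, h3⟩ := hZprop v hv
    exact hpS v h1 h2 h3
  have hclZ : ∀ v ∈ Za, ∀ w ∈ Zb, cl v ≠ cl w := by
    intro v hv w hw hq
    have hvm := Finset.mem_union_left Zb hv
    have hwm := Finset.mem_union_right Za hw
    obtain ⟨hv1, hv2, _⟩ := hpvfact v hvm
    have hwmem : w ∈ cl v := hq ▸ hcl2 w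
    rw [hv2] at hwmem
    simp only [Finset.mem_insert, Finset.mem_singleton] at hwmem
    rcases hwmem with rfl | hweq
    · exact ((hZbmem w).mp hw).2.2.2 ((hZamem w).mp hv).2.2.2
    · exact ((hZmem w).mp hwm).1 (hweq ▸ hpvinS v hvm)
  have hcross : ∀ v ∈ Za, ∀ w ∈ Zb,
      G.Adj v (pv w) ∧ G.Adj (pv v) w ∧ G.Adj (pv v) (pv w) := by
    intro v hv w hw
    have hvm := Finset.mem_union_left Zb hv
    have hwm := Finset.mem_union_right Za hw
    obtain ⟨hv1, hv2, _⟩ := hpvfact v hvm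
    obtain ⟨hw1, hw2, _⟩ := hpvfact w hwm
    exact hPP v (pv v) w (pv w) hv1 hw1 hv2 hw2 (hclZ v hv w hw) (hG v hv w hw)
  have haPv : ∀ w ∈ Za ∪ Zb, G.Adj a (pv w) ∧ G.Adj b (pv w) := by
    intro w hw
    obtain ⟨hwS, hwa, hwb⟩ := hZprop w hw
    obtain ⟨hp1, hp2, _, _, hp5, _⟩ := hpvfact w hw
    rcases Finset.mem_union.mp hw with h | h
    · have hnwb : ¬ G.Adj w b := fun hq => (hZanb w h) hq.symm
      have h3 := hPP w (pv w) b a hp1 hab hp2 (by rw [← hclb, hC₀ab, Finset.pair_comm])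
        (by rw [← hclb]; exact hp5) hnwb
      exact ⟨h3.2.2.symm, h3.2.1.symm⟩
    · have hnwa : ¬ G.Adj w a := fun hq => ((hZbmem w).mp h).2.2.2 hq.symm
      have h3 := hPP w (pv w) a b hp1 hab.symm hp2 (by rw [← hcla, hC₀ab])
        (by rw [← hcla]; exact hp5) hnwa
      exact ⟨h3.2.1.symm, h3.2.2.symm⟩
  have hZaclq : ∀ v ∈ Za, ∀ w ∈ Za, v ≠ w → G.Adj v w := by
    intro v hv w hw hvw
    by_contra hq
    obtain ⟨_, _, hvb, _⟩ := (hZamem v).mp hv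
    obtain ⟨_, _, hwb, _⟩ := (hZamem w).mp hw
    exact anti3 v w b hvw hvb hwb hq (fun hh => hZanb v hv hh.symm)
      (fun hh => hZanb w hw hh.symm)
  have hZbclq : ∀ v ∈ Zb, ∀ w ∈ Zb, v ≠ w → G.Adj v w := by
    intro v hv w hw hvw
    by_contra hq
    obtain ⟨_, hva, _, hvna⟩ := (hZbmem v).mp hv
    obtain ⟨_, hwa, _, hwna⟩ := (hZbmem w).mp hw
    exact anti3 v w a hvw hva hwa hq (fun hh => hvna hh.symm) (fun hh => hwna hh.symm)
  have hpvinj : Set.InjOn pv ↑(Za ∪ Zb) := by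
    intro x hx y hy hxy
    have hx' := Finset.mem_coe.mp hx
    have hy' := Finset.mem_coe.mp hy
    obtain ⟨hx1, hx2, _⟩ := hpvfact x hx'
    obtain ⟨hy1, hy2, _⟩ := hpvfact y hy'
    have e1 : cl x = cl (pv x) := hclu (pv x) (cl x) (hcl1 x) (by rw [hx2]; simp)
    have e2 : cl y = cl (pv y) := hclu (pv y) (cl y) (hcl1 y) (by rw [hy2]; simp)
    have e3 : cl x = cl y := by rw [e1, hxy, ← e2]
    have hym : y ∈ cl x := e3 ▸ hcl2 y
    rw [hx2] at hym
    simp only [Finset.mem_insert, Finset.mem_singleton] at hym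
    rcases hym with rfl | hyeq
    · rfl
    · exfalso
      apply ((hZmem y).mp hy').1
      rw [hyeq]
      exact hpvinS x hx'
  have hpvNot : ∀ w ∈ Za ∪ Zb, pv w ∉ Us ∧ pv w ∉ Za ∧ pv w ∉ Zb ∧ pv w ≠ a ∧ pv w ≠ b := by
    intro w hw
    obtain ⟨hp1, hp2, _⟩ := hpvfact w hw
    have hpvS' := hpvinS w hw
    refine ⟨?_, ?_, ?_, ?_, ?_⟩
    · intro hq
      have h2 := (hUsmem _).mp hq
      have e1 : cl w = cl (pv w) := hclu (pv w) (cl w) (hcl1 w) (by rw [hp2]; simp)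
      have hwm : w ∈ cl (pv w) := e1 ▸ hcl2 w
      rw [h2] at hwm
      simp only [Finset.mem_singleton] at hwm
      exact hp1 hwm.symm
    · intro hq; exact ((hZamem _).mp hq).1 hpvS'
    · intro hq; exact ((hZbmem _).mp hq).1 hpvS'
    · intro hq; exact haS (hq ▸ hpvS')
    · intro hq; exact hbS (hq ▸ hpvS')
  have haUs : a ∉ Us := by
    intro hq
    have h2 := (hUsmem a).mp hq
    have h3 : C₀ = {a} := hcla.trans h2
    rw [h3] at hC₀2
    simp at hC₀2
  have hbUs : b ∉ Us := by
    intro hq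
    have h2 := (hUsmem b).mp hq
    have h3 : C₀ = {b} := hclb.trans h2
    rw [h3] at hC₀2
    simp at hC₀2
  have haZa : a ∉ Za := fun hq => ((hZamem a).mp hq).2.1 rfl
  have hbZb : b ∉ Zb := fun hq => ((hZbmem b).mp hq).2.2.1 rfl
  have hUsadj : ∀ u ∈ Us, ∀ v, v ≠ u → G.Adj u v := fun u hu => huniv u ((hUsmem u).mp hu)
  by_cases hcmp : Zb.card ≤ Za.card
  · obtain ⟨f, hfinj, hfmap⟩ := exists_injOn_of_card_le hcmp
    obtain ⟨K, hKminor, hKcard⟩ := build_minor (G := G) a Us Za Zb pv f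
      hUsadj hZaclq (fun v hv => ((hZamem v).mp hv).2.2.2)
      (fun w hw => (haPv w (Finset.mem_union_right _ hw)).1)
      (fun v hv w hw => (hcross v hv w hw).1)
      (fun v hv w hw => (hcross v hv w hw).2.2)
      hfmap hfinj hpvinj haUs haZa
      (Finset.disjoint_of_subset_right Finset.subset_union_left hUsZdisj) hZZdisj
      (fun w hw => ⟨(hpvNot w hw).1, (hpvNot w hw).2.1, (hpvNot w hw).2.2.2.1,
        (hpvNot w hw).2.2.1⟩)
    exact ⟨K, hKminor, by omega⟩
  · push_neg at hcmp
    obtain ⟨f, hfinj, hfmap⟩ := exists_injOn_of_card_le hcmp.le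
    have hmemrw : ∀ w, w ∈ Zb ∪ Za ↔ w ∈ Za ∪ Zb := by
      intro w; rw [Finset.union_comm]
    obtain ⟨K, hKminor, hKcard⟩ := build_minor (G := G) b Us Zb Za pv f
      hUsadj hZbclq (fun v hv => hZbb v hv)
      (fun w hw => (haPv w (Finset.mem_union_left _ hw)).2)
      (fun v hv w hw => (hcross w hw v hv).2.1.symm)
      (fun v hv w hw => (hcross w hw v hv).2.2.symm)
      hfmap hfinj (by rw [Finset.union_comm]; exact hpvinj) hbUs hbZb
      (Finset.disjoint_of_subset_right Finset.subset_union_right hUsZdisj) hZZdisj.symm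
      (fun w hw => ⟨(hpvNot w ((hmemrw w).mp hw)).1, (hpvNot w ((hmemrw w).mp hw)).2.2.1,
        (hpvNot w ((hmemrw w).mp hw)).2.2.2.2, (hpvNot w ((hmemrw w).mp hw)).2.1⟩)
    exact ⟨K, hKminor, by omega⟩
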